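/- Let ψ be a positive, trace-preserving ℂ-linear map on M_d(ℂ). Then there exists a positive semidefinite matrix ρ₀ ∈ M_d(ℂ) with ψ(ρ₀) = ρ₀ whose support contains the support of every Hermitian fixed point of ψ: for every Hermitian X ∈ M_d(ℂ) with ψ(X) = X and every v ∈ ℂ^d, if ρ₀·v = 0 then X·v = 0. -/

import Mathlib

open Matrix Kronecker
open scoped ComplexOrder

/-- A bipartite matrix on `ℂ^{d₁} ⊗ ℂ^{d₂}` is separable if it is a finite sum of
Kronecker products of positive semidefinite matrices. -/
def MatSep {d₁ d₂ : ℕ} (ρ : Matrix (Fin d₁ × Fin d₂) (Fin d₁ × Fin d₂) ℂ) : Prop :=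
  ∃ (k : ℕ) (A : Fin k → Matrix (Fin d₁) (Fin d₁) ℂ) (B : Fin k → Matrix (Fin d₂) (Fin d₂) ℂ),
    (∀ i, (A i).PosSemidef) ∧ (∀ i, (B i).PosSemidef) ∧ ρ = ∑ i, A i ⊗ₖ B i

attribute [local instance] Matrix.normedAddCommGroup Matrix.normedSpace

namespace S18
variable {d : ℕ}
local notation "M" => Matrix (Fin d) (Fin d) ℂ

lemma star_single (i : Fin d) : (star (Pi.single i (1:ℂ)) : Fin d → ℂ) = Pi.single i 1 := by
  funext k
  simp [Pi.single_apply, apply_ite (star : ℂ → ℂ)]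

lemma psd_smul {A : M} (hA : A.PosSemidef) {c : ℝ} (hc : 0 ≤ c) :
    ((c : ℂ) • A).PosSemidef := by
  refine Matrix.PosSemidef.of_dotProduct_mulVec_nonneg ?_ ?_
  · unfold Matrix.IsHermitian
    rw [conjTranspose_smul, hA.1]
    simp [Complex.conj_ofReal]
  · intro x
    rw [smul_mulVec, dotProduct_smul, smul_eq_mul]
    exact mul_nonneg (by exact_mod_cast hc) (hA.dotProduct_mulVec_nonneg x)

lemma psd_sum_range {n : ℕ} {f : ℕ → M} (hf : ∀ i, (f i).PosSemidef) :
    (∑ i ∈ Finset.range n, f i).PosSemidef := by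
  classical
  induction (Finset.range n) using Finset.induction with
  | empty => simpa using Matrix.PosSemidef.zero
  | insert _ _ h ih => rw [Finset.sum_insert h]; exact (hf _).add ih

lemma psd_diag_nonneg {A : M} (hA : A.PosSemidef) (i : Fin d) : 0 ≤ A i i := by
  have := hA.dotProduct_mulVec_nonneg (Pi.single i 1)
  simpa [star_single, mulVec_single, single_dotProduct, Pi.single_apply] using this

lemma psd_diag_re_nonneg {A : M} (hA : A.PosSemidef) (i : Fin d) : 0 ≤ (A i i).re :=
  (Complex.le_def.mp (psd_diag_nonneg hA i)).1

lemma diag_re_le_trace {A : M} (hA : A.PosSemidef) (i : Fin d) : (A i i).re ≤ A.trace.re := by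
  rw [Matrix.trace, Complex.re_sum]
  exact Finset.single_le_sum (fun k _ => psd_diag_re_nonneg hA k) (Finset.mem_univ i)

lemma trace_re_nonneg {A : M} (hA : A.PosSemidef) : 0 ≤ A.trace.re := by
  rw [Matrix.trace, Complex.re_sum]
  exact Finset.sum_nonneg fun k _ => psd_diag_re_nonneg hA k

lemma entry_norm_le_trace {A : M} (hA : A.PosSemidef) (i j : Fin d) :
    ‖A i j‖ ≤ A.trace.re := by
  rcases eq_or_ne i j with rfl | hij
  · have h0 := psd_diag_nonneg hA i
    have him : (A i i).im = 0 := (Complex.le_def.mp h0).2.symm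
    have : A i i = ((A i i).re : ℂ) := Complex.ext rfl him
    rw [this, Complex.norm_real, Real.norm_eq_abs,
      abs_of_nonneg (psd_diag_re_nonneg hA i)]
    exact diag_re_le_trace hA i
  rcases eq_or_ne (A i j) 0 with hz | hz
  · simp [hz, trace_re_nonneg hA]
  set s : ℂ := -(‖A i j‖ : ℂ) / A i j with hs
  have hnz : (‖A i j‖ : ℂ) ≠ 0 := by exact_mod_cast norm_ne_zero_iff.mpr hz
  have h1 : s * A i j = -(‖A i j‖ : ℂ) := by rw [hs]; exact div_mul_cancel₀ _ hz
  have hji : A j i = starRingEnd ℂ (A i j) := by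
    rw [← hA.1.apply i j]; simp
  have h2 : starRingEnd ℂ s * A j i = -(‖A i j‖ : ℂ) := by
    rw [hji, ← RingHom.map_mul, h1]
    simp [Complex.conj_ofReal]
  have hcnz : starRingEnd ℂ (A i j) ≠ 0 := by simpa using hz
  have h3 : starRingEnd ℂ s * s = 1 := by
    have e1 : starRingEnd ℂ s * s
        = (‖A i j‖ : ℂ)^2 / (starRingEnd ℂ (A i j) * A i j) := by
      rw [hs, map_div₀, map_neg, Complex.conj_ofReal, div_mul_div_comm, neg_mul_neg, sq]
    rw [e1, mul_comm, Complex.mul_conj, Complex.normSq_eq_norm_sq]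
    push_cast
    rw [div_self (by positivity)]
  have hx := hA.dotProduct_mulVec_nonneg ((Pi.single i (1:ℂ) : Fin d → ℂ) + s • (Pi.single j (1:ℂ) : Fin d → ℂ))
  simp only [star_add, star_smul, star_single, mulVec_add, mulVec_smul, mulVec_single,
    add_dotProduct, smul_dotProduct, dotProduct_add, dotProduct_smul, single_dotProduct,
    smul_eq_mul, mul_one] at hx
  simp only [star_single, single_dotProduct, one_mul, Matrix.col_apply, MulOpposite.op_one, one_smul] at hx
  have key : (A i i + star s * A j i) + s * (A i j + star s * A j j)
      = A i i + A j j - ((2 * ‖A i j‖ : ℝ) : ℂ) := by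
    rw [Complex.star_def, mul_add, ← mul_assoc, mul_comm s (starRingEnd ℂ s), h3, one_mul,
      h1, h2]
    push_cast
    ring
  rw [key] at hx
  have hre := (Complex.le_def.mp hx).1
  simp only [Complex.zero_re, Complex.sub_re, Complex.add_re, Complex.ofReal_re] at hre
  have hi := diag_re_le_trace hA i
  have hj := diag_re_le_trace hA j
  linarith

lemma herm_form_real {A : M} (hA : A.IsHermitian) (x : Fin d → ℂ) :
    star (star x ⬝ᵥ A *ᵥ x) = star x ⬝ᵥ A *ᵥ x := by
  conv_lhs => rw [star_dotProduct]
  rw [star_star, star_mulVec, dotProduct_mulVec, hA.eq]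

lemma dot_self_re (x : Fin d → ℂ) : star x ⬝ᵥ x = ((∑ k, ‖x k‖^2 : ℝ) : ℂ) := by
  push_cast
  unfold dotProduct
  refine Finset.sum_congr rfl fun k _ => ?_
  rw [Pi.star_apply, Complex.star_def, mul_comm, Complex.mul_conj, Complex.normSq_eq_norm_sq]
  push_cast
  ring

lemma quad_bound (X : M) (x : Fin d → ℂ) :
    ‖star x ⬝ᵥ X *ᵥ x‖ ≤ (∑ k, ∑ l, ‖X k l‖) * ∑ k, ‖x k‖^2 := by
  set c := ∑ k, ∑ l, ‖X k l‖ with hc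
  have rowle : ∀ k, (∑ l, ‖X k l‖) ≤ c := fun k =>
    Finset.single_le_sum (f := fun k => ∑ l, ‖X k l‖)
      (fun k _ => Finset.sum_nonneg fun _ _ => norm_nonneg _) (Finset.mem_univ k)
  have colle : ∀ l, (∑ k, ‖X k l‖) ≤ c := by
    intro l
    have : c = ∑ l, ∑ k, ‖X k l‖ := Finset.sum_comm
    rw [this]
    exact Finset.single_le_sum (f := fun l => ∑ k, ‖X k l‖)
      (fun l _ => Finset.sum_nonneg fun _ _ => norm_nonneg _) (Finset.mem_univ l)
  have step1 : ‖star x ⬝ᵥ X *ᵥ x‖ ≤ ∑ k, ∑ l, ‖x k‖ * ‖X k l‖ * ‖x l‖ := by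
    unfold dotProduct mulVec
    refine (norm_sum_le _ _).trans (Finset.sum_le_sum fun k _ => ?_)
    rw [norm_mul, Pi.star_apply, norm_star]
    unfold dotProduct
    calc ‖x k‖ * ‖∑ l, X k l * x l‖ ≤ ‖x k‖ * ∑ l, ‖X k l * x l‖ := by
          exact mul_le_mul_of_nonneg_left (norm_sum_le _ _) (norm_nonneg _)
      _ = ∑ l, ‖x k‖ * ‖X k l‖ * ‖x l‖ := by
          rw [Finset.mul_sum]
          exact Finset.sum_congr rfl fun l _ => by rw [norm_mul]; ring
  have step2 : ∑ k, ∑ l, ‖x k‖ * ‖X k l‖ * ‖x l‖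
      ≤ ∑ k, ∑ l, ‖X k l‖ * ((‖x k‖^2 + ‖x l‖^2)/2) := by
    refine Finset.sum_le_sum fun k _ => Finset.sum_le_sum fun l _ => ?_
    have h := norm_nonneg (X k l)
    nlinarith [sq_nonneg (‖x k‖ - ‖x l‖)]
  have b1 : ∑ k, ∑ l, ‖X k l‖ * ‖x k‖^2 ≤ c * ∑ k, ‖x k‖^2 := by
    calc ∑ k, ∑ l, ‖X k l‖ * ‖x k‖^2 = ∑ k, (∑ l, ‖X k l‖) * ‖x k‖^2 := by
          exact Finset.sum_congr rfl fun k _ => (Finset.sum_mul _ _ _).symm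
      _ ≤ ∑ k, c * ‖x k‖^2 := Finset.sum_le_sum fun k _ =>
          mul_le_mul_of_nonneg_right (rowle k) (sq_nonneg _)
      _ = c * ∑ k, ‖x k‖^2 := (Finset.mul_sum _ _ _).symm
  have b2 : ∑ k, ∑ l, ‖X k l‖ * ‖x l‖^2 ≤ c * ∑ k, ‖x k‖^2 := by
    rw [Finset.sum_comm]
    calc ∑ l, ∑ k, ‖X k l‖ * ‖x l‖^2 = ∑ l, (∑ k, ‖X k l‖) * ‖x l‖^2 := by
          exact Finset.sum_congr rfl fun l _ => (Finset.sum_mul _ _ _).symm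
      _ ≤ ∑ l, c * ‖x l‖^2 := Finset.sum_le_sum fun l _ =>
          mul_le_mul_of_nonneg_right (colle l) (sq_nonneg _)
      _ = c * ∑ k, ‖x k‖^2 := (Finset.mul_sum _ _ _).symm
  have step3 : ∑ k, ∑ l, ‖X k l‖ * ((‖x k‖^2 + ‖x l‖^2)/2)
      ≤ c * ∑ k, ‖x k‖^2 := by
    have expand : ∑ k, ∑ l, ‖X k l‖ * ((‖x k‖^2 + ‖x l‖^2)/2)
        = (∑ k, ∑ l, ‖X k l‖ * ‖x k‖^2)/2 + (∑ k, ∑ l, ‖X k l‖ * ‖x l‖^2)/2 := by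
      rw [Finset.sum_div, Finset.sum_div, ← Finset.sum_add_distrib]
      refine Finset.sum_congr rfl fun k _ => ?_
      rw [Finset.sum_div, Finset.sum_div, ← Finset.sum_add_distrib]
      refine Finset.sum_congr rfl fun l _ => ?_
      ring
    rw [expand]
    linarith
  linarith

lemma herm_dom {X : M} (hX : X.IsHermitian) :
    (((∑ k, ∑ l, ‖X k l‖ : ℝ) : ℂ) • (1 : M) - X).PosSemidef := by
  set c := ∑ k, ∑ l, ‖X k l‖ with hc
  refine Matrix.PosSemidef.of_dotProduct_mulVec_nonneg ?_ ?_
  · unfold Matrix.IsHermitian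
    rw [conjTranspose_sub, conjTranspose_smul, conjTranspose_one, hX.eq]
    simp [Complex.conj_ofReal]
  · intro x
    have hform : star x ⬝ᵥ ((c:ℂ) • (1:M) - X) *ᵥ x
        = (c:ℂ) * (star x ⬝ᵥ x) - star x ⬝ᵥ X *ᵥ x := by
      rw [sub_mulVec, dotProduct_sub, smul_mulVec, one_mulVec, dotProduct_smul,
        smul_eq_mul]
    set z := star x ⬝ᵥ X *ᵥ x with hz
    have hzre : z = ((z.re : ℝ) : ℂ) := by
      have := herm_form_real hX x
      rw [← hz] at this
      have him : z.im = 0 := by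
        have h2 := congrArg Complex.im this
        simp at h2
        linarith
      exact Complex.ext rfl (by simp [him])
    have hb : z.re ≤ c * ∑ k, ‖x k‖^2 := by
      calc z.re ≤ ‖z‖ := Complex.re_le_norm z
        _ ≤ c * ∑ k, ‖x k‖^2 := quad_bound X x
    rw [hform, dot_self_re, hzre]
    have : (c:ℂ) * ((∑ k, ‖x k‖^2 : ℝ) : ℂ) - ((z.re : ℝ) : ℂ)
        = (((c * ∑ k, ‖x k‖^2 - z.re : ℝ)) : ℂ) := by push_cast; ring
    rw [this]
    rw [Complex.zero_le_real]
    linarith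

lemma form_continuous (x : Fin d → ℂ) :
    Continuous (fun A : M => star x ⬝ᵥ A *ᵥ x) := by
  have : (fun A : M => star x ⬝ᵥ A *ᵥ x)
      = fun A : M => ∑ k, star (x k) * ∑ l, A k l * x l := rfl
  rw [this]
  exact continuous_finset_sum _ fun k _ =>
    continuous_const.mul (continuous_finset_sum _ fun l _ =>
      (continuous_apply_apply k l).mul continuous_const)

lemma psd_of_tendsto {f : ℕ → M} {Z : M} (hf : ∀ n, (f n).PosSemidef)
    (h : Filter.Tendsto f Filter.atTop (nhds Z)) : Z.PosSemidef := by
  refine Matrix.PosSemidef.of_dotProduct_mulVec_nonneg ?_ ?_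
  · have hct : Continuous (fun A : M => Aᴴ) :=
      continuous_matrix fun i j => continuous_star.comp (continuous_apply_apply j i)
    have h1 : Filter.Tendsto (fun n => (f n)ᴴ) Filter.atTop (nhds Zᴴ) :=
      (hct.tendsto Z).comp h
    have h2 : (fun n => (f n)ᴴ) = f := funext fun n => (hf n).1
    rw [h2] at h1
    exact tendsto_nhds_unique h1 h
  · intro x
    have htt : Filter.Tendsto (fun n => star x ⬝ᵥ (f n) *ᵥ x) Filter.atTop
        (nhds (star x ⬝ᵥ Z *ᵥ x)) := ((form_continuous x).tendsto Z).comp h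
    have hre : 0 ≤ (star x ⬝ᵥ Z *ᵥ x).re := by
      refine ge_of_tendsto ((Complex.continuous_re.tendsto _).comp htt) ?_
      filter_upwards with n
      exact (Complex.le_def.mp ((hf n).dotProduct_mulVec_nonneg x)).1
    have him : (star x ⬝ᵥ Z *ᵥ x).im = 0 := by
      have h1 : Filter.Tendsto (fun n => (star x ⬝ᵥ (f n) *ᵥ x).im) Filter.atTop
          (nhds ((star x ⬝ᵥ Z *ᵥ x).im)) := (Complex.continuous_im.tendsto _).comp htt
      have h2 : (fun n => (star x ⬝ᵥ (f n) *ᵥ x).im) = fun _ => 0 :=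
        funext fun n => ((Complex.le_def.mp ((hf n).dotProduct_mulVec_nonneg x)).2).symm
      rw [h2] at h1
      exact (tendsto_nhds_unique h1 tendsto_const_nhds)
    exact Complex.le_def.mpr ⟨hre, him.symm⟩

end S18

/-- A positive trace-preserving map has a positive semidefinite fixed point whose support
contains the support of every Hermitian fixed point. -/
theorem stmt_18 (d : ℕ) (ψ : Matrix (Fin d) (Fin d) ℂ →ₗ[ℂ] Matrix (Fin d) (Fin d) ℂ)
    (hpos : ∀ X : Matrix (Fin d) (Fin d) ℂ, X.PosSemidef → (ψ X).PosSemidef)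
    (htp : ∀ X, (ψ X).trace = X.trace) :
    ∃ ρ₀ : Matrix (Fin d) (Fin d) ℂ, ρ₀.PosSemidef ∧ ψ ρ₀ = ρ₀ ∧
      ∀ X : Matrix (Fin d) (Fin d) ℂ, X.IsHermitian → ψ X = X →
        ∀ v : Fin d → ℂ, ρ₀.mulVec v = 0 → X.mulVec v = 0 := by
  classical
  set Md := Matrix (Fin d) (Fin d) ℂ
  -- iterates preserve positivity, traces, and fixed points
  have hpowpos : ∀ (k : ℕ) (X : Md), X.PosSemidef → ((ψ^k) X).PosSemidef := by
    intro k
    induction k with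
    | zero => intro X hX; simpa using hX
    | succ k ih =>
        intro X hX
        rw [pow_succ', Module.End.mul_apply]
        exact hpos _ (ih X hX)
  have hpowtr : ∀ (k : ℕ) (X : Md), ((ψ^k) X).trace = X.trace := by
    intro k
    induction k with
    | zero => intro X; simp
    | succ k ih =>
        intro X
        rw [pow_succ', Module.End.mul_apply, htp, ih]
  have hpowfix : ∀ (k : ℕ) (X : Md), ψ X = X → (ψ^k) X = X := by
    intro k X hX
    induction k with
    | zero => simp
    | succ k ih => rw [pow_succ', Module.End.mul_apply, ih, hX]
  -- the Cesàro means of the iterates of the identity matrix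
  set S : ℕ → Md := fun n => ((((n : ℝ)+1)⁻¹ : ℝ) : ℂ) • ∑ k ∈ Finset.range (n+1), (ψ^k) 1
    with hSdef
  have hS_psd : ∀ n, (S n).PosSemidef := fun n =>
    S18.psd_smul (S18.psd_sum_range fun k => hpowpos k 1 Matrix.PosSemidef.one)
      (by positivity)
  have hS_tr : ∀ n, (S n).trace = (d : ℂ) := by
    intro n
    rw [hSdef]
    simp only [Matrix.trace_smul, Matrix.trace_sum]
    have : ∀ k ∈ Finset.range (n+1), ((ψ^k) (1:Md)).trace = (d : ℂ) := by
      intro k _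
      rw [hpowtr k 1, Matrix.trace_one]
      simp
    rw [Finset.sum_congr rfl this, Finset.sum_const, Finset.card_range]
    push_cast
    rw [smul_eq_mul]
    have h1 : ((n:ℝ)+1) ≠ 0 := by positivity
    have : ((n : ℂ) + 1) ≠ 0 := by exact_mod_cast h1
    field_simp
    rw [nsmul_eq_mul]; push_cast; ring
  have hS_bd : ∀ n, ‖S n‖ ≤ d := by
    intro n
    rw [Matrix.norm_le_iff (by positivity)]
    intro i j
    calc ‖S n i j‖ ≤ (S n).trace.re := S18.entry_norm_le_trace (hS_psd n) i j
      _ = d := by rw [hS_tr n]; simp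
  -- extract a convergent subsequence
  haveI : FiniteDimensional ℂ Md := by infer_instance
  haveI : ProperSpace Md := FiniteDimensional.proper ℂ Md
  obtain ⟨Z, -, φ, hφ, hlim⟩ :=
    tendsto_subseq_of_bounded (Metric.isBounded_closedBall (x := (0:Md)) (r := d))
      (fun n => by simpa [Metric.mem_closedBall, dist_zero_right] using hS_bd n)
  have hZpsd : Z.PosSemidef := S18.psd_of_tendsto (fun n => hS_psd (φ n)) hlim
  -- Z is a fixed point
  have hcont : Continuous ψ := ψ.continuous_of_finiteDimensional
  have hkey : ∀ n, ψ (S n) = S n + ((((n : ℝ)+1)⁻¹ : ℝ) : ℂ) • ((ψ^(n+1)) 1 - 1) := by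
    intro n
    have e1 : ψ (S n) = ((((n : ℝ)+1)⁻¹ : ℝ) : ℂ) • ∑ k ∈ Finset.range (n+1), (ψ^(k+1)) 1 := by
      simp only [hSdef]
      rw [_root_.map_smul, map_sum]
      congr 1
      refine Finset.sum_congr rfl fun k _ => ?_
      rw [pow_succ', Module.End.mul_apply]
    have e2 : ∑ k ∈ Finset.range (n+1), ((ψ^(k+1)) (1:Md))
        = (∑ k ∈ Finset.range (n+1), (ψ^k) 1) + ((ψ^(n+1)) 1 - 1) := by
      have h1 := Finset.sum_range_succ (fun k => (ψ^k) (1:Md)) (n+1)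
      have h2 := Finset.sum_range_succ' (fun k => (ψ^k) (1:Md)) (n+1)
      rw [h1] at h2
      have : (ψ^0) (1:Md) = 1 := by simp
      rw [this] at h2
      -- h2 : ∑_{range(n+1)} ψ^k 1 + ψ^{n+1} 1 = ∑_{k∈range(n+1)} ψ^{k+1} 1 + 1
      rw [eq_sub_iff_add_eq.mpr h2.symm]
      abel
    rw [e1, e2, smul_add]
  have hfix : ψ Z = Z := by
    have h1 : Filter.Tendsto (fun n => ψ (S (φ n))) Filter.atTop (nhds (ψ Z)) :=
      (hcont.tendsto Z).comp hlim
    have hD : Filter.Tendsto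
        (fun n : ℕ => ((((n : ℝ)+1)⁻¹ : ℝ) : ℂ) • (((ψ^(n+1)) (1:Md)) - 1)) Filter.atTop
        (nhds 0) := by
      apply squeeze_zero_norm (a := fun n : ℕ => ((n : ℝ)+1)⁻¹ * ((d:ℝ) + ‖(1:Md)‖))
      · intro n
        rw [norm_smul]
        have hb : ‖((ψ^(n+1)) (1:Md)) - 1‖ ≤ (d:ℝ) + ‖(1:Md)‖ := by
          refine (norm_sub_le _ _).trans ?_
          have hψ1 : ‖(ψ^(n+1)) (1:Md)‖ ≤ (d:ℝ) := by
            rw [Matrix.norm_le_iff (by positivity)]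
            intro i j
            have h := S18.entry_norm_le_trace (hpowpos (n+1) 1 Matrix.PosSemidef.one) i j
            rw [hpowtr (n+1) 1, Matrix.trace_one] at h
            simpa using h
          linarith
        have hc : ‖(((((n : ℝ)+1)⁻¹ : ℝ)) : ℂ)‖ = ((n : ℝ)+1)⁻¹ := by
          rw [Complex.norm_real, Real.norm_eq_abs, abs_of_nonneg (by positivity)]
        rw [hc]
        exact mul_le_mul_of_nonneg_left hb (by positivity)
      · have := tendsto_one_div_add_atTop_nhds_zero_nat.mul_const ((d:ℝ) + ‖(1:Md)‖)
        rw [zero_mul] at this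
        convert this using 2 with n
        rw [one_div]
    have hDφ : Filter.Tendsto
        (fun n : ℕ => ((((φ n : ℝ)+1)⁻¹ : ℝ) : ℂ) • (((ψ^(φ n+1)) (1:Md)) - 1)) Filter.atTop
        (nhds 0) := hD.comp hφ.tendsto_atTop
    have h2 : Filter.Tendsto (fun n => ψ (S (φ n))) Filter.atTop (nhds Z) := by
      have : (fun n => ψ (S (φ n)))
          = fun n => S (φ n) + ((((φ n : ℝ)+1)⁻¹ : ℝ) : ℂ) • (((ψ^(φ n+1)) (1:Md)) - 1) :=
        funext fun n => hkey (φ n)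
      rw [this]
      have := hlim.add hDφ
      rwa [add_zero] at this
    exact tendsto_nhds_unique h1 h2
  refine ⟨Z, hZpsd, hfix, ?_⟩
  -- support property
  intro X hX hfixX v hv
  set c : ℝ := ∑ k, ∑ l, ‖X k l‖ with hc
  -- the matrices c•Z ± X are PSD
  have habs : ∀ Y : Md, Y.IsHermitian → ψ Y = Y →
      (((∑ k, ∑ l, ‖Y k l‖ : ℝ) : ℂ) • Z - Y).PosSemidef := by
    intro Y hY hfixY
    set cY : ℝ := ∑ k, ∑ l, ‖Y k l‖ with hcY
    have hdom := S18.herm_dom hY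
    have hPn : ∀ n, ((cY : ℂ) • S n - Y).PosSemidef := by
      intro n
      have heq : (cY : ℂ) • S n - Y
          = ((((n : ℝ)+1)⁻¹ : ℝ) : ℂ) •
            ∑ k ∈ Finset.range (n+1), (ψ^k) ((cY : ℂ) • (1:Md) - Y) := by
        have e : ∀ k, (ψ^k) ((cY : ℂ) • (1:Md) - Y) = (cY : ℂ) • ((ψ^k) 1) - Y := by
          intro k
          rw [map_sub, _root_.map_smul, hpowfix k Y hfixY]
        rw [Finset.sum_congr rfl (fun k _ => e k), Finset.sum_sub_distrib,
          Finset.sum_const, Finset.card_range, smul_sub, ← Finset.smul_sum]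
        congr 1
        · simp only [hSdef]
          rw [smul_comm]
        · rw [← Nat.cast_smul_eq_nsmul ℂ, smul_smul]
          have h1 : ((n:ℝ)+1) ≠ 0 := by positivity
          have : ((((n : ℝ)+1)⁻¹ : ℝ) : ℂ) * ((n+1 : ℕ) : ℂ) = 1 := by
            push_cast
            rw [inv_mul_cancel₀ (by exact_mod_cast h1)]
          rw [this, one_smul]
      rw [heq]
      exact S18.psd_smul (S18.psd_sum_range fun k => hpowpos k _ hdom) (by positivity)
    have hlim2 : Filter.Tendsto (fun n => (cY : ℂ) • S (φ n) - Y) Filter.atTop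
        (nhds ((cY : ℂ) • Z - Y)) := by
      exact (hlim.const_smul _).sub tendsto_const_nhds
    exact S18.psd_of_tendsto (fun n => hPn (φ n)) hlim2
  have hP : ((c : ℂ) • Z - X).PosSemidef := habs X hX hfixX
  have hQ : ((c : ℂ) • Z + X).PosSemidef := by
    have hXneg : (-X).IsHermitian := hX.neg
    have hfixneg : ψ (-X) = -X := by rw [map_neg, hfixX]
    have := habs (-X) hXneg hfixneg
    have hcn : (∑ k, ∑ l, ‖(-X) k l‖ : ℝ) = c := by
      simp [hc, Matrix.neg_apply]
    rw [hcn, sub_neg_eq_add] at this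
    exact this
  -- conclude
  have hPv : star v ⬝ᵥ ((c : ℂ) • Z - X) *ᵥ v = -(star v ⬝ᵥ X *ᵥ v) := by
    rw [sub_mulVec, smul_mulVec, hv, smul_zero, zero_sub, dotProduct_neg]
  have hQv : star v ⬝ᵥ ((c : ℂ) • Z + X) *ᵥ v = star v ⬝ᵥ X *ᵥ v := by
    rw [add_mulVec, smul_mulVec, hv, smul_zero, zero_add]
  have h1 : 0 ≤ -(star v ⬝ᵥ X *ᵥ v) := by rw [← hPv]; exact hP.dotProduct_mulVec_nonneg v
  have h2 : 0 ≤ star v ⬝ᵥ X *ᵥ v := by rw [← hQv]; exact hQ.dotProduct_mulVec_nonneg v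
  have h0 : star v ⬝ᵥ X *ᵥ v = 0 := le_antisymm (by simpa [neg_nonneg] using h1) h2
  have hPv0 : star v ⬝ᵥ ((c : ℂ) • Z - X) *ᵥ v = 0 := by rw [hPv, h0, neg_zero]
  have hPzero : ((c : ℂ) • Z - X) *ᵥ v = 0 :=
    (hP.dotProduct_mulVec_zero_iff v).mp hPv0
  have : (c : ℂ) • (Z *ᵥ v) - X *ᵥ v = 0 := by
    rw [← smul_mulVec, ← sub_mulVec]
    exact hPzero
  rw [hv, smul_zero, zero_sub, neg_eq_zero] at this
  exact this
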